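/- Openness of the immersion relation for the sphere: Let E be a 3-dimensional real inner product space and B the open ball of radius 9/10. The set R = {(x, y, φ) ∈ E × E × L(E,E) | x ∉ B ⇒ φ restricted to x^⊥ is injective} is open in E × E × L(E,E). -/

import Mathlib

/-- Openness of the immersion relation for the sphere: in a 3-dimensional real inner
product space, the set of 1-jets `(x, y, φ)` such that `φ` is injective on `x ^⊥`
whenever `x` is outside the ball of radius `9/10` is open. -/
theorem immersion_relation_isOpen {E : Type*} [NormedAddCommGroup E]
    [InnerProductSpace ℝ E] (hdim : Module.finrank ℝ E = 3) :
    IsOpen {p : E × E × (E →L[ℝ] E) |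
      p.1 ∉ Metric.ball (0 : E) (9 / 10) →
        Set.InjOn p.2.2 ((ℝ ∙ p.1)ᗮ : Set E)} := by
  classical
  have : FiniteDimensional ℝ E := .of_finrank_eq_succ hdim
  -- the "projection-like" map, equal to the identity on `x ^⊥`
  set pr : E → E →L[ℝ] E := fun x =>
    ContinuousLinearMap.id ℝ E - (‖x‖ ^ 2)⁻¹ • (innerSL ℝ x).smulRight x with hpr
  set F : E × E × (E →L[ℝ] E) → (E →L[ℝ] E × ℝ) := fun p =>
    (p.2.2.comp (pr p.1)).prod (innerSL ℝ p.1) with hF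
  have hprv : ∀ x v : E, (inner ℝ x v : ℝ) = 0 → pr x v = v := by
    intro x v hv
    simp [hpr, hv]
  have hFapp : ∀ (p : E × E × (E →L[ℝ] E)) (v : E),
      F p v = (p.2.2 (pr p.1 v), (inner ℝ p.1 v : ℝ)) := fun p v => rfl
  -- continuity of `F` away from `x = 0`
  have hFcont : ContinuousOn F {p : E × E × (E →L[ℝ] E) | p.1 ≠ 0} := by
    have hsr : Continuous fun x : E => (innerSL ℝ x).smulRight x := by
      have h1 : Continuous fun x : E =>
          ContinuousLinearMap.smulRightL ℝ E E (innerSL ℝ x) :=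
        ((ContinuousLinearMap.smulRightL ℝ E E).comp (innerSL ℝ)).continuous
      exact h1.clm_apply continuous_id
    have hprcont : ContinuousOn pr {x : E | x ≠ 0} := by
      apply ContinuousOn.sub continuousOn_const
      apply ContinuousOn.fun_smul _ hsr.continuousOn
      exact ((continuous_norm.pow 2).continuousOn).inv₀ fun x hx =>
        pow_ne_zero 2 (norm_ne_zero_iff.mpr hx)
    have hcomp : ContinuousOn (fun p : E × E × (E →L[ℝ] E) => p.2.2.comp (pr p.1))
        {p : E × E × (E →L[ℝ] E) | p.1 ≠ 0} :=
      ContinuousOn.clm_comp (continuous_snd.snd.continuousOn)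
        (hprcont.comp continuous_fst.continuousOn fun p hp => hp)
    have hinner : Continuous fun p : E × E × (E →L[ℝ] E) => innerSL ℝ p.1 :=
      (innerSL ℝ).continuous.comp continuous_fst
    exact ((ContinuousLinearMap.prodₗᵢ ℝ).continuous.comp_continuousOn
      (hcomp.prodMk hinner.continuousOn))
  -- the key equivalence, for `x ≠ 0`
  have key : ∀ p : E × E × (E →L[ℝ] E), p.1 ≠ 0 →
      (Function.Injective (F p) ↔ Set.InjOn p.2.2 ((ℝ ∙ p.1)ᗮ : Set E)) := by
    rintro ⟨x, y, φ⟩ _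
    constructor
    · intro hinj u hu v hv huv
      apply hinj
      have hu' : (inner ℝ x u : ℝ) = 0 :=
        Submodule.mem_orthogonal_singleton_iff_inner_right.mp hu
      have hv' : (inner ℝ x v : ℝ) = 0 :=
        Submodule.mem_orthogonal_singleton_iff_inner_right.mp hv
      rw [hFapp, hFapp]
      simp only [hprv x u hu', hprv x v hv', hu', hv', huv]
    · intro hinj
      rw [injective_iff_map_eq_zero]
      intro v hv
      rw [hFapp, Prod.mk_eq_zero] at hv
      obtain ⟨h1, h2⟩ := hv
      have hv' : v ∈ ((ℝ ∙ x)ᗮ : Set E) :=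
        Submodule.mem_orthogonal_singleton_iff_inner_right.mpr h2
      rw [hprv x v h2] at h1
      exact hinj hv' (Submodule.zero_mem _) (by simpa using h1)
  -- rewrite the set as a union of two open sets
  have hset : {p : E × E × (E →L[ℝ] E) |
      p.1 ∉ Metric.ball (0 : E) (9 / 10) →
        Set.InjOn p.2.2 ((ℝ ∙ p.1)ᗮ : Set E)} =
      {p : E × E × (E →L[ℝ] E) | p.1 ∈ Metric.ball (0 : E) (9 / 10)} ∪
      ({p : E × E × (E →L[ℝ] E) | p.1 ≠ 0} ∩
        F ⁻¹' {L : E →L[ℝ] E × ℝ | Function.Injective L}) := by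
    ext p
    simp only [Set.mem_setOf_eq, Set.mem_union, Set.mem_inter_iff, Set.mem_preimage]
    constructor
    · intro hp
      by_cases hx : p.1 ∈ Metric.ball (0 : E) (9 / 10)
      · exact Or.inl hx
      · have hx0 : p.1 ≠ 0 := by
          intro h
          exact hx (by norm_num [h])
        exact Or.inr ⟨hx0, (key p hx0).mpr (hp hx)⟩
    · rintro (hp | ⟨hx0, hinj⟩) hx
      · exact absurd hp hx
      · exact (key p hx0).mp hinj
  rw [hset]
  apply IsOpen.union
  · exact Metric.isOpen_ball.preimage continuous_fst
  · exact hFcont.isOpen_inter_preimage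
      (isOpen_compl_singleton.preimage continuous_fst)
      ContinuousLinearMap.isOpen_injective
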